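/- Let φ and ψ be Drinfeld-Stuhler O_D-modules over an A-field L of generic A-characteristic (i.e. γ : A → L is injective). Then: (1) the map ∂ : Hom_L(φ, ψ) → M_d(L) is injective; (2) End_L(φ) is a commutative ring, identified by ∂ with an A-subalgebra of L (embedded as scalar matrices). -/

import Mathlib

noncomputable section

open scoped TensorProduct

namespace DS

/-! ### Skew polynomial rings -/

section SkewPoly

variable {R : Type*} [Ring R]

/-- The skew polynomial ring `R[τ; σ]`: finitely supported sequences of coefficients,
with multiplication twisted by the ring endomorphism `σ`, so that `τ b = σ(b) τ`. -/
def SkewPoly (R : Type*) [Ring R] (_σ : R →+* R) : Type _ := ℕ →₀ R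

namespace SkewPoly

variable {σ : R →+* R}

instance : AddCommGroup (SkewPoly R σ) := inferInstanceAs (AddCommGroup (ℕ →₀ R))

instance {S : Type*} [Semiring S] [Module S R] : Module S (SkewPoly R σ) :=
  inferInstanceAs (Module S (ℕ →₀ R))

/-- The underlying finitely supported function of coefficients. -/
def toFinsupp (f : SkewPoly R σ) : ℕ →₀ R := f

/-- The `n`-th coefficient of a skew polynomial. -/
def coeff (f : SkewPoly R σ) (n : ℕ) : R := toFinsupp f n

/-- The skew polynomial `a·τ^n`. -/
def single (σ : R →+* R) (n : ℕ) (a : R) : SkewPoly R σ := Finsupp.single n a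

private def mulAux (σ : R →+* R) (f g : ℕ →₀ R) : ℕ →₀ R :=
  f.sum fun i a => g.sum fun j b => Finsupp.single (i + j) (a * (⇑σ)^[i] b)

private lemma mulAux_zero (σ : R →+* R) (f : ℕ →₀ R) : mulAux σ f 0 = 0 := by
  simp [mulAux]

private lemma zero_mulAux (σ : R →+* R) (f : ℕ →₀ R) : mulAux σ 0 f = 0 := by
  simp [mulAux]

private lemma mulAux_add (σ : R →+* R) (f g h : ℕ →₀ R) :
    mulAux σ f (g + h) = mulAux σ f g + mulAux σ f h := by
  unfold mulAux
  rw [← Finsupp.sum_add]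
  refine Finsupp.sum_congr fun i _ => ?_
  rw [Finsupp.sum_add_index]
  · intro j _
    simp
  · intro j _ b₁ b₂
    simp [mul_add, Finsupp.single_add]

private lemma add_mulAux (σ : R →+* R) (f g h : ℕ →₀ R) :
    mulAux σ (f + g) h = mulAux σ f h + mulAux σ g h := by
  unfold mulAux
  rw [Finsupp.sum_add_index]
  · intro i _
    simp
  · intro i _ a₁ a₂
    rw [← Finsupp.sum_add]
    refine Finsupp.sum_congr fun j _ => ?_
    simp [add_mul, Finsupp.single_add]

private lemma single_mulAux_single (σ : R →+* R) (i j : ℕ) (a b : R) :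
    mulAux σ (Finsupp.single i a) (Finsupp.single j b)
      = Finsupp.single (i + j) (a * (⇑σ)^[i] b) := by
  unfold mulAux
  rw [Finsupp.sum_single_index, Finsupp.sum_single_index]
  · simp
  · rw [Finsupp.sum_single_index] <;> simp

private lemma mulAux_assoc (σ : R →+* R) (f g h : ℕ →₀ R) :
    mulAux σ (mulAux σ f g) h = mulAux σ f (mulAux σ g h) := by
  induction f using Finsupp.induction_linear with
  | zero => simp [zero_mulAux]
  | add f₁ f₂ hf₁ hf₂ => simp [add_mulAux, hf₁, hf₂]
  | single i a =>
    induction g using Finsupp.induction_linear with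
    | zero => simp [zero_mulAux, mulAux_zero]
    | add g₁ g₂ hg₁ hg₂ => simp [add_mulAux, mulAux_add, hg₁, hg₂]
    | single j b =>
      induction h using Finsupp.induction_linear with
      | zero => simp [mulAux_zero]
      | add h₁ h₂ hh₁ hh₂ => simp [mulAux_add, hh₁, hh₂]
      | single k c =>
        rw [single_mulAux_single, single_mulAux_single, single_mulAux_single,
          single_mulAux_single]
        rw [add_assoc, mul_assoc]
        congr 2
        rw [Function.iterate_add_apply]
        rw [iterate_map_mul]

instance instRing : Ring (SkewPoly R σ) :=
  { (inferInstance : AddCommGroup (SkewPoly R σ)) with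
    mul := fun f g => (mulAux σ (toFinsupp f) (toFinsupp g) : SkewPoly R σ)
    one := (Finsupp.single 0 1 : ℕ →₀ R)
    mul_assoc := fun f g h => mulAux_assoc σ f g h
    one_mul := fun f => by
      show mulAux σ (Finsupp.single 0 1) f = f
      unfold mulAux
      rw [Finsupp.sum_single_index]
      · simp
        exact Finsupp.sum_single (f : ℕ →₀ R)
      · simp
        exact Finset.sum_const_zero
    mul_one := fun f => by
      show mulAux σ f (Finsupp.single 0 1) = f
      unfold mulAux
      refine Eq.trans (Finsupp.sum_congr fun i _ => ?_) (Finsupp.sum_single _)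
      rw [Finsupp.sum_single_index] <;> simp
    left_distrib := fun f g h => mulAux_add σ f g h
    right_distrib := fun f g h => add_mulAux σ f g h
    zero_mul := fun f => zero_mulAux σ f
    mul_zero := fun f => mulAux_zero σ f }

lemma mul_def (f g : SkewPoly R σ) :
    f * g = (mulAux σ (toFinsupp f) (toFinsupp g) : SkewPoly R σ) := rfl

/-- Push a skew polynomial along a map of coefficient rings (applied coefficientwise). -/
def mapCoeffs {R' : Type*} [Ring R'] {σ' : R' →+* R'} (g : R →+* R') (f : SkewPoly R σ) :
    SkewPoly R' σ' := Finsupp.mapRange g g.map_zero (toFinsupp f)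

end SkewPoly

end SkewPoly



section Setup

variable (p e d : ℕ) [Fact p.Prime]

/-- The `q = p^e`-power Frobenius, applied entrywise to `d × d` matrices. -/
def matFrob (L : Type*) [Field L] [CharP L p] :
    Matrix (Fin d) (Fin d) L →+* Matrix (Fin d) (Fin d) L :=
  (iterateFrobenius L p e).mapMatrix

/-- The ring `M_d(L[τ])` of `d × d` matrices over the skew polynomial ring `L[τ]`
(realized as skew polynomials with matrix coefficients). -/
abbrev MdTau (L : Type*) [Field L] [CharP L p] :=
  SkewPoly (Matrix (Fin d) (Fin d) L) (matFrob p e d L)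

variable {p e d}

/-- The coordinates of the additive polynomial map `𝔾_a^d → 𝔾_a^d` defined by
`S ∈ M_d(L[τ])`. -/
def kerPolys {L : Type*} [Field L] [CharP L p] (S : MdTau p e d L) :
    Fin d → MvPolynomial (Fin d) L := fun j =>
  (SkewPoly.toFinsupp S).sum fun i B =>
    ∑ k : Fin d, MvPolynomial.C (B j k) * MvPolynomial.X k ^ (p ^ e) ^ i

/-- The ideal of the scheme-theoretic kernel of `S : 𝔾_a^d → 𝔾_a^d`. -/
def kerIdeal {L : Type*} [Field L] [CharP L p] (S : MdTau p e d L) :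
    Ideal (MvPolynomial (Fin d) L) :=
  Ideal.span (Set.range (kerPolys S))

/-- `S : 𝔾_a^d → 𝔾_a^d` has kernel a finite group scheme, i.e. the coordinate ring of its
scheme-theoretic kernel is a finite-dimensional vector space. -/
def HasFiniteKernel {L : Type*} [Field L] [CharP L p] (S : MdTau p e d L) : Prop :=
  Module.Finite L (MvPolynomial (Fin d) L ⧸ kerIdeal S)

/-- The order of the scheme-theoretic kernel of `S`, namely the dimension over `L` of the
coordinate ring of the kernel. -/
def kernelOrder {L : Type*} [Field L] [CharP L p] (S : MdTau p e d L) : ℕ :=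
  Module.finrank L (MvPolynomial (Fin d) L ⧸ kerIdeal S)

/-- Evaluation of `S ∈ M_d(L[τ])` on points of `𝔾_a^d` with values in an `L`-algebra `Ω`. -/
def actOn {L : Type*} [Field L] [CharP L p] (S : MdTau p e d L) (Ω : Type*) [CommRing Ω]
    [Algebra L Ω] (v : Fin d → Ω) : Fin d → Ω := fun j =>
  (SkewPoly.toFinsupp S).sum fun i B =>
    ∑ k : Fin d, algebraMap L Ω (B j k) * v k ^ (p ^ e) ^ i

end Setup

section Orders

variable (A : Type*) [CommRing A] (D : Type*) [Ring D] [Algebra A D]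

/-- An `A`-order in the `A`-algebra (typically, the `F`-division algebra) `D`: an `A`-subalgebra
which is finitely generated as an `A`-module and contains a common-denominator multiple of every
element of `D`. -/
def IsOrder (O : Subalgebra A D) : Prop :=
  (Subalgebra.toSubmodule O).FG ∧
    ∀ x : D, ∃ (s : A) (y : O), s ≠ 0 ∧ algebraMap A D s * x = (y : D)

/-- A maximal `A`-order in `D`. -/
def IsMaximalOrder (O : Subalgebra A D) : Prop :=
  IsOrder A D O ∧ ∀ O' : Subalgebra A D, IsOrder A D O' → O ≤ O' → O' = O

end Orders

section DrinfeldStuhler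

variable {p e d : ℕ} [Fact p.Prime]
variable {A : Type*} [CommRing A] {D : Type*} [Ring D] [Algebra A D]

/-- A Drinfeld–Stuhler `O_D`-module structure over the `A`-field `(L, γ)`:
an embedding `φ : O_D → M_d(L[τ])` such that for every nonzero `b ∈ O_D` the kernel of `φ_b` is
a finite group scheme over `L` of order `#(O_D/O_D·b)`, and such that the action of `A` on the
tangent space `Lie(𝔾_a^d)` is via `γ`. -/
structure IsDrinfeldStuhler (OD : Subalgebra A D) {L : Type*} [Field L] [CharP L p]
    (γ : A →+* L) (φ : OD →+* MdTau p e d L) : Prop where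
  inj : Function.Injective φ
  ker_fin : ∀ b : OD, b ≠ 0 → HasFiniteKernel (φ b)
  ker_order : ∀ b : OD, b ≠ 0 →
    kernelOrder (φ b) = Nat.card (OD ⧸ (Ideal.span {b} : Ideal OD))
  lie : ∀ a : A,
    SkewPoly.coeff (φ (algebraMap A OD a)) 0 = γ a • (1 : Matrix (Fin d) (Fin d) L)

end DrinfeldStuhler

section Splitting

variable {A : Type*} [CommRing A] [IsDomain A] [IsDedekindDomain A]
variable (F : Type*) [Field F] [Algebra A F] [IsFractionRing A F]
variable (D : Type*) [Ring D] [Algebra F D]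
variable (d : ℕ)

open IsDedekindDomain

/-- The division algebra `D` splits at the finite place `v` of `F`, i.e. `D ⊗_F F_v` is a matrix
algebra over the completion `F_v`. -/
def SplitsAt (v : HeightOneSpectrum A) : Prop :=
  letI : SMulCommClass F (v.adicCompletion F) (v.adicCompletion F) :=
    Algebra.to_smulCommClass
  letI : Algebra (v.adicCompletion F) ((v.adicCompletion F) ⊗[F] D) :=
    Algebra.TensorProduct.leftAlgebra
  Nonempty (((v.adicCompletion F) ⊗[F] D) ≃ₐ[v.adicCompletion F]
    Matrix (Fin d) (Fin d) (v.adicCompletion F))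

/-- The `A`-characteristic `ker γ` of the `A`-field `(L, γ)` does not divide `𝔯(D)`:
it is either zero (generic characteristic) or a prime at which `D` is split. -/
def CharNotDividesRam {L : Type*} [Field L] (γ : A →+* L) : Prop :=
  RingHom.ker γ = ⊥ ∨
    ∃ v : HeightOneSpectrum A, RingHom.ker γ = v.asIdeal ∧ SplitsAt F D d v

end Splitting


section Morphisms

variable {p e d : ℕ} [Fact p.Prime]
variable {A : Type*} [CommRing A] {D : Type*} [Ring D] [Algebra A D]
variable {OD : Subalgebra A D}
variable {L : Type*} [Field L] [CharP L p]

/-- A morphism `u : φ → ψ` of Drinfeld–Stuhler modules over `L`: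
an element `u ∈ M_d(L[τ])` with `u φ_b = ψ_b u` for all `b ∈ O_D`. -/
def IsMorphism (φ ψ : OD →+* MdTau p e d L) (u : MdTau p e d L) : Prop :=
  ∀ b : OD, u * φ b = ψ b * u

/-- `φ` and `ψ` are isomorphic Drinfeld–Stuhler modules over `L`. -/
def IsIsomorphic (φ ψ : OD →+* MdTau p e d L) : Prop :=
  ∃ u : (MdTau p e d L)ˣ, ∀ b : OD, (u : MdTau p e d L) * φ b = ψ b * (u : MdTau p e d L)

/-- The endomorphism ring `End_L(φ)`: the centralizer of `φ(O_D)` in `M_d(L[τ])`. -/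
def EndRing (φ : OD →+* MdTau p e d L) : Subring (MdTau p e d L) :=
  Subring.centralizer (Set.range fun b : OD => φ b)

lemma mem_endRing_iff {φ : OD →+* MdTau p e d L} {x : MdTau p e d L} :
    x ∈ EndRing φ ↔ ∀ b : OD, φ b * x = x * φ b := by
  unfold EndRing
  rw [Subring.mem_centralizer_iff]
  constructor
  · intro h b
    exact h _ ⟨b, rfl⟩
  · rintro h g ⟨b, rfl⟩
    exact h b

/-- The `A`-algebra structure map of `End_L(φ)`, `a ↦ φ_a`. -/
def endScalars (φ : OD →+* MdTau p e d L) : A →+* EndRing φ where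
  toFun a := ⟨φ (algebraMap A OD a), mem_endRing_iff.mpr fun b => by
    rw [← map_mul, ← map_mul, Algebra.commutes]⟩
  map_one' := by
    ext
    simp
  map_mul' a b := by
    ext
    simp [map_mul]
  map_zero' := by
    ext
    simp
  map_add' a b := by
    ext
    simp [map_add]

/-- `End_L(φ)` as an `A`-algebra. -/
def endAlgebra (φ : OD →+* MdTau p e d L) : Algebra A (EndRing φ) :=
  RingHom.toAlgebra' (endScalars φ) (by
    intro a x
    apply Subtype.ext
    rw [MulMemClass.coe_mul, MulMemClass.coe_mul]
    exact mem_endRing_iff.mp x.2 (algebraMap A OD a))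

end Morphisms

section Places

/-- `K/F` is an imaginary extension relative to the distinguished place `∞` of `F` (given by its
valuation subring): there is exactly one place of `K` lying above `∞`. -/
def IsImaginary {F : Type*} [Field F] (vinf : ValuationSubring F)
    (K : Type*) [Field K] [Algebra F K] : Prop :=
  ∃! w : ValuationSubring K, w.comap (algebraMap F K) = vinf

end Places

section MapCoeffsHom

variable {R R' : Type*} [Ring R] [Ring R'] {σ : R →+* R} {σ' : R' →+* R'}

namespace SkewPoly

private lemma iterate_compat (g : R →+* R') (hg : ∀ x, g (σ x) = σ' (g x)) :
    ∀ (i : ℕ) (b : R), g ((⇑σ)^[i] b) = (⇑σ')^[i] (g b) := by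
  intro i
  induction i with
  | zero => intro b; simp
  | succ i ih =>
    intro b
    rw [Function.iterate_succ_apply', Function.iterate_succ_apply', hg, ih]

private lemma mapRange_mulAux (g : R →+* R') (hg : ∀ x, g (σ x) = σ' (g x)) (f h : ℕ →₀ R) :
    Finsupp.mapRange g g.map_zero (mulAux σ f h) =
      mulAux σ' (Finsupp.mapRange g g.map_zero f) (Finsupp.mapRange g g.map_zero h) := by
  induction f using Finsupp.induction_linear with
  | zero => simp [zero_mulAux]
  | add f₁ f₂ h₁ h₂ =>
    rw [add_mulAux, Finsupp.mapRange_add g.map_add, Finsupp.mapRange_add g.map_add, add_mulAux,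
      h₁, h₂]
  | single i a =>
    induction h using Finsupp.induction_linear with
    | zero => simp [mulAux_zero]
    | add h₁ h₂ hh₁ hh₂ =>
      rw [mulAux_add, Finsupp.mapRange_add g.map_add, Finsupp.mapRange_add g.map_add, mulAux_add,
        hh₁, hh₂]
    | single j b =>
      rw [single_mulAux_single, Finsupp.mapRange_single, Finsupp.mapRange_single,
        Finsupp.mapRange_single, single_mulAux_single, map_mul, iterate_compat g hg]

/-- `mapCoeffs` as a ring homomorphism, given compatibility of the coefficient map with
the twists. -/
def mapCoeffsHom (g : R →+* R') (hg : ∀ x, g (σ x) = σ' (g x)) :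
    SkewPoly R σ →+* SkewPoly R' σ' where
  toFun := mapCoeffs g
  map_one' := by
    show Finsupp.mapRange g g.map_zero (Finsupp.single 0 1) = Finsupp.single 0 1
    rw [Finsupp.mapRange_single, map_one]
  map_mul' f h := mapRange_mulAux g hg f h
  map_zero' := by
    show Finsupp.mapRange g g.map_zero 0 = 0
    exact Finsupp.mapRange_zero
  map_add' f h := by
    show Finsupp.mapRange g g.map_zero (f + h) = _
    exact Finsupp.mapRange_add g.map_add f h

@[simp] lemma mapCoeffsHom_apply (g : R →+* R') (hg : ∀ x, g (σ x) = σ' (g x))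
    (f : SkewPoly R σ) : mapCoeffsHom g hg f = mapCoeffs g f := rfl

end SkewPoly

end MapCoeffsHom

section BaseChange

variable {p e d : ℕ} [Fact p.Prime]

lemma matFrob_compat {L L' : Type*} [Field L] [CharP L p] [Field L'] [CharP L' p]
    (g : L →+* L') (M : Matrix (Fin d) (Fin d) L) :
    g.mapMatrix (matFrob p e d L M) = matFrob p e d L' (g.mapMatrix M) := by
  ext i j
  simp only [matFrob, RingHom.mapMatrix_apply, Matrix.map_apply, iterateFrobenius_def, map_pow]

/-- Base change of `M_d(L[τ])` along a field embedding `L → L'`. -/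
def baseChangeHom {L L' : Type*} [Field L] [CharP L p] [Field L'] [CharP L' p]
    (g : L →+* L') : MdTau p e d L →+* MdTau p e d L' :=
  SkewPoly.mapCoeffsHom g.mapMatrix (matFrob_compat g)

end BaseChange

section EndF

variable {p e d : ℕ} [Fact p.Prime]
variable {A : Type*} [CommRing A] {D : Type*} [Ring D] [Algebra A D]
variable {OD : Subalgebra A D} {L : Type*} [Field L] [CharP L p]
variable (F : Type*) [Field F] [Algebra A F]

/-- The `F`-algebra `End_L(φ) ⊗_A F`. -/
def EndF (φ : OD →+* MdTau p e d L) : Type _ :=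
  letI : Algebra A (EndRing φ) := endAlgebra φ
  F ⊗[A] ↥(EndRing φ)

noncomputable instance (φ : OD →+* MdTau p e d L) : Ring (EndF F φ) :=
  letI : Algebra A (EndRing φ) := endAlgebra φ
  (inferInstance : Ring (F ⊗[A] ↥(EndRing φ)))

noncomputable instance (φ : OD →+* MdTau p e d L) : Algebra F (EndF F φ) :=
  letI : Algebra A (EndRing φ) := endAlgebra φ
  (inferInstance : Algebra F (F ⊗[A] ↥(EndRing φ)))

/-- The canonical map `End_L(φ) → End_L(φ) ⊗_A F`. -/
noncomputable def endIncl (φ : OD →+* MdTau p e d L) : ↥(EndRing φ) →+* EndF F φ :=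
  letI : Algebra A (EndRing φ) := endAlgebra φ
  (Algebra.TensorProduct.includeRight (R := A) (A := F) (B := ↥(EndRing φ))).toRingHom

end EndF

section AdicBaseChange

open IsDedekindDomain

variable (Atil : Type*) [CommRing Atil] [IsDomain Atil] [IsDedekindDomain Atil]
variable (Ftil : Type*) [Field Ftil] [Algebra Atil Ftil] [IsFractionRing Atil Ftil]
variable (E : Type*) [Ring E] [Algebra Ftil E]
variable (Q : HeightOneSpectrum Atil)

/-- The base change `E ⊗_{F̃} F̃_Q` of an `F̃`-algebra `E` to the completion of `F̃` at the
finite place `Q`. -/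
def AdicBC : Type _ := (Q.adicCompletion Ftil) ⊗[Ftil] E

noncomputable instance : Ring (AdicBC Atil Ftil E Q) :=
  inferInstanceAs (Ring ((Q.adicCompletion Ftil) ⊗[Ftil] E))

noncomputable instance : Algebra (Q.adicCompletion Ftil) (AdicBC Atil Ftil E Q) :=
  letI : SMulCommClass Ftil (Q.adicCompletion Ftil) (Q.adicCompletion Ftil) :=
    Algebra.to_smulCommClass
  inferInstanceAs
    (Algebra (Q.adicCompletion Ftil) ((Q.adicCompletion Ftil) ⊗[Ftil] E))

end AdicBaseChange


/-! ### Auxiliary lemmas -/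

section CoeffAux

namespace SkewPoly

variable {R : Type*} [Ring R] {σ : R →+* R}

lemma coeff_add (f g : SkewPoly R σ) (n : ℕ) :
    coeff (f + g) n = coeff f n + coeff g n := rfl

lemma coeff_sub (f g : SkewPoly R σ) (n : ℕ) :
    coeff (f - g) n = coeff f n - coeff g n := rfl

lemma coeff_zero' (n : ℕ) : coeff (0 : SkewPoly R σ) n = 0 := rfl

lemma coeff_mul (f g : SkewPoly R σ) (n : ℕ) :
    coeff (f * g) n
      = ∑ i ∈ Finset.range (n + 1), coeff f i * (⇑σ)^[i] (coeff g (n - i)) := by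
  classical
  have expand : coeff (f * g) n =
      ∑ i ∈ (toFinsupp f).support, ∑ j ∈ (toFinsupp g).support,
        (if i + j = n then (toFinsupp f) i * (⇑σ)^[i] ((toFinsupp g) j) else 0) := by
    show (mulAux σ (toFinsupp f) (toFinsupp g)) n = _
    unfold mulAux
    rw [Finsupp.sum_apply]
    rw [Finsupp.sum]
    refine Finset.sum_congr rfl fun i _ => ?_
    rw [Finsupp.sum_apply, Finsupp.sum]
    refine Finset.sum_congr rfl fun j _ => ?_
    rw [Finsupp.single_apply]
  rw [expand]
  have inner : ∀ i, (∑ j ∈ (toFinsupp g).support,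
      (if i + j = n then (toFinsupp f) i * (⇑σ)^[i] ((toFinsupp g) j) else 0))
      = if i ≤ n then (toFinsupp f) i * (⇑σ)^[i] ((toFinsupp g) (n - i)) else 0 := by
    intro i
    by_cases hi : i ≤ n
    · rw [if_pos hi]
      have hcong : ∀ j ∈ (toFinsupp g).support,
          (if i + j = n then (toFinsupp f) i * (⇑σ)^[i] ((toFinsupp g) j) else 0)
            = if j = n - i then (toFinsupp f) i * (⇑σ)^[i] ((toFinsupp g) j) else 0 := by
        intro j _
        congr 1
        apply propext
        omega
      rw [Finset.sum_congr rfl hcong, Finset.sum_ite_eq' (toFinsupp g).support (n - i)]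
      by_cases hmem : n - i ∈ (toFinsupp g).support
      · rw [if_pos hmem]
      · rw [if_neg hmem, Finsupp.notMem_support_iff.mp hmem, iterate_map_zero, mul_zero]
    · rw [if_neg hi]
      refine Finset.sum_eq_zero fun j _ => ?_
      rw [if_neg (by omega)]
  rw [Finset.sum_congr rfl fun i _ => inner i]
  have h1 : ∑ i ∈ (toFinsupp f).support,
      (if i ≤ n then (toFinsupp f) i * (⇑σ)^[i] ((toFinsupp g) (n - i)) else 0)
      = ∑ i ∈ (toFinsupp f).support ∩ Finset.range (n + 1),
        (if i ≤ n then (toFinsupp f) i * (⇑σ)^[i] ((toFinsupp g) (n - i)) else 0) := by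
    refine (Finset.sum_subset Finset.inter_subset_left fun i hi hni => ?_).symm
    rw [if_neg]
    intro hle
    exact hni (Finset.mem_inter.mpr ⟨hi, Finset.mem_range.mpr (by omega)⟩)
  rw [h1]
  refine (Finset.sum_subset Finset.inter_subset_right fun i hi hni => ?_).trans
    (Finset.sum_congr rfl fun i hi => ?_)
  · have hf0 : (toFinsupp f) i = 0 := by
      by_contra hne
      exact hni (Finset.mem_inter.mpr ⟨Finsupp.mem_support_iff.mpr hne, hi⟩)
    have hle : i ≤ n := by
      have := Finset.mem_range.mp hi
      omega
    rw [if_pos hle, hf0, zero_mul]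
  · have hle : i ≤ n := by
      have := Finset.mem_range.mp hi
      omega
    rw [if_pos hle]
    rfl



lemma coeff_one' : coeff (1 : SkewPoly R σ) 0 = 1 := by
  show (Finsupp.single 0 (1 : R) : ℕ →₀ R) 0 = 1
  simp

lemma coeff_mul_zero' (f g : SkewPoly R σ) :
    coeff (f * g) 0 = coeff f 0 * coeff g 0 := by
  rw [coeff_mul]
  simp

lemma coeff_mul_of_lt (f g : SkewPoly R σ) (n : ℕ) (h : ∀ i < n, coeff f i = 0) :
    coeff (f * g) n = coeff f n * (⇑σ)^[n] (coeff g 0) := by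
  rw [coeff_mul, Finset.sum_eq_single_of_mem n (Finset.self_mem_range_succ n)]
  · rw [Nat.sub_self]
  · intro i hi hne
    rw [h i (by have := Finset.mem_range.mp hi; omega), zero_mul]

lemma coeff_mul_of_lt' (f g : SkewPoly R σ) (n : ℕ) (h : ∀ j < n, coeff g j = 0) :
    coeff (f * g) n = coeff f 0 * coeff g n := by
  rw [coeff_mul, Finset.sum_eq_single_of_mem 0 (Finset.mem_range.mpr (by omega))]
  · simp
  · intro i hi hne
    rw [h (n - i) (by have := Finset.mem_range.mp hi; omega), iterate_map_zero, mul_zero]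

end SkewPoly

section MatFrobAux

variable {p e d : ℕ} [Fact p.Prime] {L : Type*} [Field L] [CharP L p]

lemma matFrob_smul_one (c : L) :
    matFrob p e d L (c • 1) = (c ^ p ^ e) • 1 := by
  have hp : (p : ℕ) ≠ 0 := (Fact.out : p.Prime).ne_zero
  ext i j
  simp only [matFrob, RingHom.mapMatrix_apply, Matrix.map_apply, iterateFrobenius_def,
    Matrix.smul_apply, Matrix.one_apply, smul_eq_mul]
  by_cases hij : i = j
  · simp [hij]
  · simp [hij, zero_pow (pow_ne_zero e hp)]

lemma matFrob_iterate_smul_one (m : ℕ) (c : L) :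
    (⇑(matFrob p e d L))^[m] (c • (1 : Matrix (Fin d) (Fin d) L))
      = (c ^ (p ^ e) ^ m) • 1 := by
  induction m generalizing c with
  | zero => simp
  | succ m ih =>
      rw [Function.iterate_succ_apply, matFrob_smul_one, ih (c ^ p ^ e), ← pow_mul,
        ← pow_succ']

end MatFrobAux

section PartOneAux

variable {p e d : ℕ} [Fact p.Prime]
variable {A : Type*} [CommRing A] {D : Type*} [Ring D] [Algebra A D]
variable {OD : Subalgebra A D} {L : Type*} [Field L] [CharP L p]

/-- Part (1): a morphism between Drinfeld–Stuhler modules in generic characteristic whose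
`∂` vanishes is zero. -/
lemma morphism_eq_zero_of_coeff_zero [Infinite A] (he : 0 < e)
    (γ : A →+* L) (hgen : Function.Injective γ)
    (φ ψ : OD →+* MdTau p e d L)
    (hφ : ∀ a : A, SkewPoly.coeff (φ (algebraMap A OD a)) 0
      = γ a • (1 : Matrix (Fin d) (Fin d) L))
    (hψ : ∀ a : A, SkewPoly.coeff (ψ (algebraMap A OD a)) 0
      = γ a • (1 : Matrix (Fin d) (Fin d) L))
    (u : MdTau p e d L) (hm : IsMorphism φ ψ u)
    (h0 : SkewPoly.coeff u 0 = 0) : u = 0 := by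
  classical
  by_contra hu
  have hsupp : (SkewPoly.toFinsupp u).support.Nonempty :=
    Finsupp.support_nonempty_iff.mpr hu
  set n := (SkewPoly.toFinsupp u).support.min' hsupp with hn
  have hmem : n ∈ (SkewPoly.toFinsupp u).support := Finset.min'_mem _ _
  have hU : SkewPoly.coeff u n ≠ 0 := Finsupp.mem_support_iff.mp hmem
  have hlow : ∀ i < n, SkewPoly.coeff u i = 0 := by
    intro i hi
    by_contra hne
    have : n ≤ i := Finset.min'_le _ _ (Finsupp.mem_support_iff.mpr hne)
    omega
  have hn0 : n ≠ 0 := fun h => hU (h ▸ h0)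
  set U := SkewPoly.coeff u n with hUdef
  -- the eigenvalue identity for all a ∈ A
  have hroot : ∀ a : A, γ a ^ (p ^ e) ^ n = γ a := by
    intro a
    have key := hm (algebraMap A OD a)
    have hL : SkewPoly.coeff (u * φ (algebraMap A OD a)) n
        = (γ a ^ (p ^ e) ^ n) • U := by
      rw [SkewPoly.coeff_mul_of_lt _ _ _ hlow, hφ a, matFrob_iterate_smul_one,
        mul_smul_comm, mul_one]
    have hR : SkewPoly.coeff (ψ (algebraMap A OD a) * u) n = γ a • U := by
      rw [SkewPoly.coeff_mul_of_lt' _ _ _ hlow, hψ a, smul_mul_assoc, one_mul]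
    have heq : (γ a ^ (p ^ e) ^ n) • U = γ a • U := by
      rw [← hL, ← hR, key]
    have hsub : (γ a ^ (p ^ e) ^ n - γ a) • U = 0 := by
      rw [sub_smul, heq, sub_self]
    by_contra hne
    have hcne : γ a ^ (p ^ e) ^ n - γ a ≠ 0 := sub_ne_zero.mpr hne
    apply hU
    have := congrArg (fun M => (γ a ^ (p ^ e) ^ n - γ a)⁻¹ • M) hsub
    simpa [smul_smul, inv_mul_cancel₀ hcne] using this
  -- contradiction with infinitude of A
  set k := (p ^ e) ^ n with hk
  have hk1 : 1 < k := by
    have hp : 1 < p := (Fact.out : p.Prime).one_lt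
    have : 1 < p ^ e := Nat.one_lt_pow (by omega) hp
    exact Nat.one_lt_pow hn0 this
  set P : Polynomial L := Polynomial.X ^ k - Polynomial.X with hP
  have hPne : P ≠ 0 := by
    intro h
    have : P.coeff k = 1 := by
      rw [hP, Polynomial.coeff_sub, Polynomial.coeff_X_pow, if_pos rfl,
        Polynomial.coeff_X, if_neg (by omega), sub_zero]
    rw [h, Polynomial.coeff_zero] at this
    exact one_ne_zero this.symm
  have hfin : {x : L | P.IsRoot x}.Finite := Polynomial.finite_setOf_isRoot hPne
  have huniv : (Set.univ : Set A).Finite := by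
    refine Set.Finite.subset (hfin.preimage hgen.injOn) fun a _ => ?_
    show P.IsRoot (γ a)
    simp [hP, Polynomial.IsRoot, hroot a]
  haveI : Finite A := Set.finite_univ_iff.mp huniv
  exact not_finite A

end PartOneAux


end CoeffAux


section SimpleAux


variable {F L D M : Type*} [Field F] [Field L] [Algebra F L]
  [DivisionRing D] [Algebra F D] [Ring M] [Nontrivial M]
  [Algebra L M] [Algebra F M] [IsScalarTower F L M]

/-- Injectivity of any `L`-algebra map out of `L ⊗[F] D` for `D` a central division
algebra over `F`. -/
theorem tensor_algHom_injective (hc : Subalgebra.center F D = ⊥)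
    (g : L ⊗[F] D →ₐ[L] M) : Function.Injective g := by
  classical
  -- coordinates with respect to a basis of L over F
  let b := Module.Basis.ofVectorSpace F L
  let e : L ⊗[F] D ≃ₗ[F] (Module.Basis.ofVectorSpaceIndex F L →₀ D) :=
    (TensorProduct.congr b.repr (LinearEquiv.refl F D)).trans
      (TensorProduct.finsuppScalarLeft F D _)
  have he_tmul : ∀ (l : L) (x : D) (i), e (l ⊗ₜ[F] x) i = b.repr l i • x := by
    intro l x i
    simp [e, TensorProduct.finsuppScalarLeft_apply_tmul_apply]
  have he_mulr : ∀ (t : L ⊗[F] D) (z : D) (i), e (t * (1 ⊗ₜ[F] z)) i = e t i * z := by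
    intro t z i
    induction t using TensorProduct.induction_on with
    | zero => simp
    | tmul l x =>
        rw [Algebra.TensorProduct.tmul_mul_tmul, mul_one, he_tmul, he_tmul, smul_mul_assoc]
    | add t₁ t₂ h₁ h₂ => rw [add_mul, map_add, Finsupp.add_apply, h₁, h₂,
        map_add, Finsupp.add_apply, add_mul]
  have he_mull : ∀ (t : L ⊗[F] D) (z : D) (i), e ((1 ⊗ₜ[F] z) * t) i = z * e t i := by
    intro t z i
    induction t using TensorProduct.induction_on with
    | zero => simp
    | tmul l x =>
        rw [Algebra.TensorProduct.tmul_mul_tmul, one_mul, he_tmul, he_tmul, mul_smul_comm]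
    | add t₁ t₂ h₁ h₂ => rw [mul_add, map_add, Finsupp.add_apply, h₁, h₂,
        map_add, Finsupp.add_apply, mul_add]
  have h1 : ∀ (i) (x : D), e ((b i : L) ⊗ₜ[F] x) = Finsupp.single i x := by
    intro i x
    ext j
    rw [he_tmul, Module.Basis.repr_self]
    simp only [Finsupp.single_apply]
    split <;> simp_all
  -- reconstruction
  have he_recon : ∀ t : L ⊗[F] D, t = ∑ i ∈ (e t).support, (b i : L) ⊗ₜ[F] (e t i) := by
    intro t
    conv_lhs => rw [← e.symm_apply_apply t, ← Finsupp.sum_single (e t)]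
    rw [map_finsuppSum, Finsupp.sum]
    refine Finset.sum_congr rfl fun i _ => ?_
    rw [← h1 i (e t i), e.symm_apply_apply]
  -- main argument
  suffices h : ∀ t : L ⊗[F] D, g t = 0 → t = 0 by
    intro t₁ t₂ h12
    have h0 : g (t₁ - t₂) = 0 := by rw [map_sub, h12, sub_self]
    exact sub_eq_zero.mp (h _ h0)
  intro t0 hgt0
  by_contra ht0
  -- minimal support cardinality among nonzero kernel elements
  have hex : ∃ n, ∃ t : L ⊗[F] D, (g t = 0 ∧ t ≠ 0) ∧ (e t).support.card = n :=
    ⟨_, t0, ⟨hgt0, ht0⟩, rfl⟩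
  obtain ⟨u, ⟨hgu, hu⟩, hcard⟩ := Nat.find_spec hex
  have hmin : ∀ t : L ⊗[F] D, g t = 0 → t ≠ 0 →
      (e u).support.card ≤ (e t).support.card := by
    intro t ht1 ht2
    rw [hcard]
    by_contra hlt
    exact Nat.find_min hex (lt_of_not_ge hlt) ⟨t, ⟨ht1, ht2⟩, rfl⟩
  clear hcard hex hgt0 ht0
  have heu : e u ≠ 0 := fun h' => hu (by
    have h2 := congrArg e.symm h'
    simpa using h2)
  obtain ⟨i₁, hi₁⟩ := Finsupp.support_nonempty_iff.mpr heu
  have hx₁ : e u i₁ ≠ 0 := Finsupp.mem_support_iff.mp hi₁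
  set x₁ : D := e u i₁ with hx₁def
  set u' : L ⊗[F] D := u * (1 ⊗ₜ[F] x₁⁻¹) with hu'def
  have hgu' : g u' = 0 := by rw [hu'def, map_mul, hgu, zero_mul]
  have heu' : ∀ i, e u' i = e u i * x₁⁻¹ := fun i => he_mulr u x₁⁻¹ i
  have hsupp' : (e u').support = (e u).support := by
    ext i
    simp only [Finsupp.mem_support_iff, heu']
    constructor
    · intro h' h''; exact h' (by rw [h'', zero_mul])
    · intro h' h''
      exact h' (by
        have := congrArg (· * x₁) h''
        simpa [mul_assoc, inv_mul_cancel₀ hx₁] using this)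
  have heu'i₁ : e u' i₁ = 1 := by rw [heu', mul_inv_cancel₀ hx₁]
  have hu' : u' ≠ 0 := by
    intro h'
    have : e u' i₁ = 0 := by rw [h', map_zero]; rfl
    rw [heu'i₁] at this
    exact one_ne_zero this
  clear_value x₁ u'
  clear hu'def hx₁def heu'
  -- commutators vanish
  have hcomm : ∀ (z : D) (i), z * e u' i = e u' i * z := by
    intro z i
    set v : L ⊗[F] D := (1 ⊗ₜ[F] z) * u' - u' * (1 ⊗ₜ[F] z) with hv
    have hgv : g v = 0 := by
      rw [hv, map_sub, map_mul, map_mul, hgu', zero_mul, mul_zero, sub_zero]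
      
    have hev : ∀ j, e v j = z * e u' j - e u' j * z := by
      intro j
      rw [hv, map_sub, Finsupp.sub_apply, he_mull u' z j, he_mulr u' z j]
    have hsubset : (e v).support ⊆ (e u').support.erase i₁ := by
      intro j hj
      rw [Finsupp.mem_support_iff, hev] at hj
      rw [Finset.mem_erase, Finsupp.mem_support_iff]
      constructor
      · intro h'
        exact hj (by rw [h', heu'i₁, mul_one, one_mul, sub_self])
      · intro h'
        exact hj (by rw [h', mul_zero, zero_mul, sub_self])
    have hv0 : v = 0 := by
      by_contra hvne
      have := hmin v hgv hvne
      have hcv : (e v).support.card ≤ ((e u').support.erase i₁).card :=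
        Finset.card_le_card hsubset
      have hlt : ((e u').support.erase i₁).card < (e u).support.card := by
        rw [hsupp']
        exact Finset.card_erase_lt_of_mem hi₁
      omega
    have := hev i
    rw [hv0, map_zero] at this
    exact sub_eq_zero.mp (by simpa using this.symm)
  -- each coefficient is central, hence scalar
  have hcent : ∀ i, ∃ r : F, e u' i = algebraMap F D r := by
    intro i
    have : e u' i ∈ Subalgebra.center F D :=
      Subalgebra.mem_center_iff.mpr fun z => hcomm z i
    rw [hc, Algebra.mem_bot] at this
    obtain ⟨r, hr⟩ := this
    exact ⟨r, hr.symm⟩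
  choose r hr using hcent
  -- u' = c ⊗ 1
  set c : L := ∑ i ∈ (e u').support, r i • (b i : L) with hcdef
  have hu'c : u' = c ⊗ₜ[F] (1 : D) := by
    conv_lhs => rw [he_recon u']
    rw [hcdef, TensorProduct.sum_tmul]
    refine Finset.sum_congr rfl fun i _ => ?_
    rw [hr i, Algebra.algebraMap_eq_smul_one]
    exact (TensorProduct.smul_tmul _ _ _).symm
  have hcne : c ≠ 0 := by
    intro h'
    rw [h', TensorProduct.zero_tmul] at hu'c
    exact hu' hu'c
  have : g u' = algebraMap L M c := by
    rw [hu'c]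
    have : (c ⊗ₜ[F] (1 : D)) = algebraMap L (L ⊗[F] D) c := by
      rw [Algebra.TensorProduct.algebraMap_apply, Algebra.algebraMap_self_apply]
    rw [this, AlgHom.commutes]
  rw [hgu'] at this
  exact hcne ((algebraMap L M).injective (by rw [← this, map_zero]))


end SimpleAux

section PartThreeAux

variable {p e d : ℕ} [Fact p.Prime]
variable {A : Type*} [CommRing A] [IsDomain A]
variable {F : Type*} [Field F] [Algebra A F] [IsFractionRing A F]
variable {D : Type*} [DivisionRing D] [Algebra F D] [Algebra A D] [IsScalarTower A F D]
variable {OD : Subalgebra A D} {L : Type*} [Field L] [CharP L p] [Algebra A L]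

/-- Part (3): in generic characteristic, `∂` of any endomorphism is a scalar matrix. -/
lemma endo_coeff_scalar (hd : 0 < d)
    (hcentral : Subalgebra.center F D = ⊥)
    (hdim : Module.finrank F D = d ^ 2)
    (hord : ∀ x : D, ∃ (s : A) (y : OD), s ≠ 0 ∧ algebraMap A D s * x = (y : D))
    (hgen : Function.Injective (algebraMap A L))
    (φ : OD →+* MdTau p e d L)
    (hφ : ∀ a : A, SkewPoly.coeff (φ (algebraMap A OD a)) 0
      = algebraMap A L a • (1 : Matrix (Fin d) (Fin d) L))
    (u : MdTau p e d L) (hm : IsMorphism φ φ u) :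
    ∃ c : L, SkewPoly.coeff u 0 = c • (1 : Matrix (Fin d) (Fin d) L) := by
  classical
  haveI : Nonempty (Fin d) := ⟨⟨0, hd⟩⟩
  letI algF : Algebra F L := (IsFractionRing.lift (g := algebraMap A L) hgen).toAlgebra
  have hγF : ∀ a : A, algebraMap F L (algebraMap A F a) = algebraMap A L a := fun a =>
    IsFractionRing.lift_algebraMap hgen a
  have hγ' : ∀ a : A, a ≠ 0 → algebraMap A L a ≠ 0 := by
    intro a ha h0
    exact ha (hgen (by rw [h0, map_zero]))
  -- ∂ ∘ φ as a multiplicative-additive map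
  set δ : OD → Matrix (Fin d) (Fin d) L := fun b => SkewPoly.coeff (φ b) 0 with hδ
  have δmul : ∀ b₁ b₂ : OD, δ (b₁ * b₂) = δ b₁ * δ b₂ := by
    intro b₁ b₂
    rw [hδ]
    show SkewPoly.coeff (φ (b₁ * b₂)) 0 = _
    rw [map_mul, SkewPoly.coeff_mul_zero']
  have δadd : ∀ b₁ b₂ : OD, δ (b₁ + b₂) = δ b₁ + δ b₂ := by
    intro b₁ b₂
    show SkewPoly.coeff (φ (b₁ + b₂)) 0 = _
    rw [map_add, SkewPoly.coeff_add]
  have δone : δ 1 = 1 := by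
    show SkewPoly.coeff (φ 1) 0 = 1
    rw [map_one, SkewPoly.coeff_one']
  have δzero : δ 0 = 0 := by
    show SkewPoly.coeff (φ 0) 0 = 0
    rw [map_zero]
    rfl
  have δalg : ∀ (a : A) (b : OD), δ (algebraMap A OD a * b) = algebraMap A L a • δ b := by
    intro a b
    rw [δmul, hδ]
    show SkewPoly.coeff (φ (algebraMap A OD a)) 0 * _ = _
    rw [hφ a, smul_mul_assoc, one_mul]
  set M : Matrix (Fin d) (Fin d) L := SkewPoly.coeff u 0 with hM
  have hMδ : ∀ b : OD, Commute M (δ b) := by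
    intro b
    have key := hm b
    have h1 : SkewPoly.coeff (u * φ b) 0 = M * δ b := SkewPoly.coeff_mul_zero' _ _
    have h2 : SkewPoly.coeff (φ b * u) 0 = δ b * M := SkewPoly.coeff_mul_zero' _ _
    show M * δ b = δ b * M
    rw [← h1, ← h2, key]
  -- choose denominators
  choose sd yd hsd hxyd using hord
  set γ : A →+* L := algebraMap A L with hγ
  set f0 : D → Matrix (Fin d) (Fin d) L :=
    fun x => (γ (sd x))⁻¹ • δ (yd x) with hf0
  have hcoeOD : ∀ (a : A), ((algebraMap A OD a : OD) : D) = algebraMap A D a := by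
    intro a
    rfl
  have hcons : ∀ (x : D) (s' : A) (y' : OD), s' ≠ 0 →
      algebraMap A D s' * x = (y' : D) → f0 x = (γ s')⁻¹ • δ y' := by
    intro x s' y' hs' hy'
    have hD : algebraMap A D s' * (yd x : D) = algebraMap A D (sd x) * (y' : D) := by
      rw [← hxyd x, ← hy', ← mul_assoc, ← mul_assoc, ← map_mul, ← map_mul, mul_comm s']
    have hOD : algebraMap A OD s' * yd x = algebraMap A OD (sd x) * y' := by
      apply Subtype.ext
      rw [MulMemClass.coe_mul, MulMemClass.coe_mul, hcoeOD, hcoeOD]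
      exact hD
    have hsmul : γ s' • δ (yd x) = γ (sd x) • δ y' := by
      rw [← δalg, ← δalg, hOD]
    rw [hf0]
    show (γ (sd x))⁻¹ • δ (yd x) = _
    rw [eq_comm, inv_smul_eq_iff₀ (hγ' _ hs'), smul_smul, mul_comm, ← smul_smul, hsmul,
      inv_smul_smul₀ (hγ' _ (hsd x))]
  have hf0coe : ∀ y' : OD, f0 (y' : D) = δ y' := by
    intro y'
    have := hcons (y' : D) 1 y' one_ne_zero (by rw [map_one, one_mul])
    rwa [map_one, inv_one, one_smul] at this
  have hf0one : f0 1 = 1 := by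
    have := hf0coe 1
    rwa [OneMemClass.coe_one, δone] at this
  have hf0zero : f0 0 = 0 := by
    have := hf0coe 0
    rwa [ZeroMemClass.coe_zero, δzero] at this
  have hAcomm : ∀ (a : A) (x : D), algebraMap A D a * x = x * algebraMap A D a := by
    intro a x
    rw [IsScalarTower.algebraMap_apply A F D]
    exact Algebra.commutes _ _
  have hf0mul : ∀ x₁ x₂ : D, f0 (x₁ * x₂) = f0 x₁ * f0 x₂ := by
    intro x₁ x₂
    have hw : algebraMap A D (sd x₁ * sd x₂) * (x₁ * x₂) = ((yd x₁ * yd x₂ : OD) : D) := by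
      rw [MulMemClass.coe_mul, ← hxyd x₁, ← hxyd x₂, map_mul]
      exact Commute.mul_mul_mul_comm (hAcomm (sd x₂) x₁) _ _
    rw [hcons _ _ _ (mul_ne_zero (hsd x₁) (hsd x₂)) hw, δmul, map_mul, mul_inv]
    rw [hf0]
    show _ = ((γ (sd x₁))⁻¹ • δ (yd x₁)) * ((γ (sd x₂))⁻¹ • δ (yd x₂))
    rw [smul_mul_smul_comm]
  have hf0add : ∀ x₁ x₂ : D, f0 (x₁ + x₂) = f0 x₁ + f0 x₂ := by
    intro x₁ x₂
    have hw : algebraMap A D (sd x₁ * sd x₂) * (x₁ + x₂)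
        = ((algebraMap A OD (sd x₂) * yd x₁ + algebraMap A OD (sd x₁) * yd x₂ : OD) : D) := by
      rw [AddMemClass.coe_add, MulMemClass.coe_mul, MulMemClass.coe_mul, hcoeOD, hcoeOD,
        ← hxyd x₁, ← hxyd x₂, map_mul, mul_add]
      congr 1
      · rw [← mul_assoc, ← map_mul, ← map_mul, mul_comm (sd x₂) (sd x₁)]
      · rw [← mul_assoc, ← map_mul]
    rw [hcons _ _ _ (mul_ne_zero (hsd x₁) (hsd x₂)) hw, δadd, δalg, δalg, map_mul]
    rw [hf0]
    show _ = (γ (sd x₁))⁻¹ • δ (yd x₁) + (γ (sd x₂))⁻¹ • δ (yd x₂)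
    rw [smul_add, smul_smul, smul_smul, mul_inv]
    congr 1
    · congr 1
      rw [mul_assoc, inv_mul_cancel₀ (hγ' _ (hsd x₂)), mul_one]
    · congr 1
      rw [mul_comm (γ (sd x₁))⁻¹, mul_assoc, inv_mul_cancel₀ (hγ' _ (hsd x₁)), mul_one]
  have hf0alg : ∀ r : F, f0 (algebraMap F D r)
      = algebraMap F (Matrix (Fin d) (Fin d) L) r := by
    intro r
    obtain ⟨a, b, hb, hr⟩ := IsFractionRing.div_surjective (A := A) r
    have hbne : b ≠ 0 := nonZeroDivisors.ne_zero hb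
    have hbF : algebraMap A F b ≠ 0 :=
      fun h => hbne ((IsFractionRing.injective A F) (by rw [h, map_zero]))
    have hw : algebraMap A D b * algebraMap F D r = ((algebraMap A OD a : OD) : D) := by
      rw [hcoeOD, IsScalarTower.algebraMap_apply A F D, ← map_mul, ← hr,
        mul_div_cancel₀ _ hbF, IsScalarTower.algebraMap_apply A F D]
    rw [hcons _ _ _ hbne hw]
    have : δ (algebraMap A OD a) = γ a • 1 := hφ a
    rw [this, smul_smul]
    have hγr : algebraMap F L r = (γ b)⁻¹ * γ a := by
      rw [← hr, map_div₀, hγF, hγF, div_eq_inv_mul]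
    rw [IsScalarTower.algebraMap_apply F L (Matrix (Fin d) (Fin d) L), hγr,
      Algebra.algebraMap_eq_smul_one (R := L)]
  -- the F-algebra homomorphism D →ₐ[F] M_d(L)
  set f : D →ₐ[F] Matrix (Fin d) (Fin d) L :=
    { toFun := f0
      map_one' := hf0one
      map_mul' := hf0mul
      map_zero' := hf0zero
      map_add' := hf0add
      commutes' := hf0alg } with hf
  -- the induced L-algebra homomorphism L ⊗[F] D →ₐ[L] M_d(L)
  set g : L ⊗[F] D →ₐ[L] Matrix (Fin d) (Fin d) L :=
    Algebra.TensorProduct.lift (Algebra.ofId L _) f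
      (fun x y => show Commute (Algebra.ofId L (Matrix (Fin d) (Fin d) L) x) (f y) from
        Algebra.commute_algebraMap_left x (f y)) with hg
  have hginj : Function.Injective g := tensor_algHom_injective hcentral g
  -- surjectivity by dimension count
  haveI : FiniteDimensional F D := FiniteDimensional.of_finrank_pos (by
    rw [hdim]; positivity)
  have hfr : Module.finrank L (L ⊗[F] D)
      = Module.finrank L (Matrix (Fin d) (Fin d) L) := by
    rw [Module.finrank_baseChange, hdim, Module.finrank_matrix, Module.finrank_self]
    simp [sq]
  have hgsurj : Function.Surjective g :=
    (LinearMap.injective_iff_surjective_of_finrank_eq_finrank hfr).mp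
      (show Function.Injective g.toLinearMap from hginj)
  -- M commutes with everything
  have hMg : ∀ t : L ⊗[F] D, Commute M (g t) := by
    intro t
    induction t using TensorProduct.induction_on with
    | zero => rw [map_zero]; exact Commute.zero_right M
    | tmul l x =>
        rw [hg, Algebra.TensorProduct.lift_tmul]
        refine Commute.mul_right ?_ ?_
        · exact (Algebra.commutes l M).symm
        · show Commute M (f0 x)
          rw [hf0]
          exact ((hMδ (yd x)).smul_right _)
    | add t₁ t₂ h₁ h₂ => rw [map_add]; exact Commute.add_right h₁ h₂
  have hMcent : M ∈ Subalgebra.center L (Matrix (Fin d) (Fin d) L) := by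
    rw [Subalgebra.mem_center_iff]
    intro N
    obtain ⟨t, rfl⟩ := hgsurj N
    exact (hMg t).symm
  have := Algebra.IsCentral.out (K := L) hMcent
  rw [Algebra.mem_bot] at this
  obtain ⟨c, hc⟩ := this
  exact ⟨c, by rw [← hc, Algebra.algebraMap_eq_smul_one]⟩

end PartThreeAux

section Statement

open IsDedekindDomain

variable {p : ℕ} [Fact p.Prime] {e d : ℕ}
variable {A : Type*} [CommRing A] [IsDomain A] [IsDedekindDomain A]
variable {F : Type*} [Field F] [Algebra A F] [IsFractionRing A F]
variable [Algebra (RatFunc (GaloisField p e)) F]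
variable {D : Type*} [DivisionRing D] [Algebra F D] [Algebra A D] [IsScalarTower A F D]
variable (OD : Subalgebra A D)
variable {L : Type*} [Field L] [CharP L p] [Algebra A L]

/-- Let `φ` and `ψ` be Drinfeld–Stuhler `O_D`-modules over an `A`-field `L` of
generic `A`-characteristic. Then: (1) `∂ : Hom_L(φ, ψ) → M_d(L)` is injective; (2) `End_L(φ)` is
a commutative ring, identified by `∂` with an `A`-subalgebra of `L` (embedded as scalar
matrices). -/
theorem generic_char_hom_partial_injective_and_end_commutative
    (he : 0 < e) (hd : 2 ≤ d)
    (hFF : FunctionField (GaloisField p e) F)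
    (hcentral : Subalgebra.center F D = ⊥)
    (hdim : Module.finrank F D = d ^ 2)
    (hOD : IsMaximalOrder A D OD)
    (hchar : CharNotDividesRam F D d (algebraMap A L))
    (hgen : Function.Injective (algebraMap A L))
    (φ ψ : OD →+* MdTau p e d L)
    (hφ : IsDrinfeldStuhler OD (algebraMap A L) φ)
    (hψ : IsDrinfeldStuhler OD (algebraMap A L) ψ) :
    (∀ u v : MdTau p e d L, IsMorphism φ ψ u → IsMorphism φ ψ v →
        SkewPoly.coeff u 0 = SkewPoly.coeff v 0 → u = v) ∧
    (∀ u v : MdTau p e d L, IsMorphism φ φ u → IsMorphism φ φ v → u * v = v * u) ∧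
    (∀ u : MdTau p e d L, IsMorphism φ φ u →
        ∃ c : L, SkewPoly.coeff u 0 = c • (1 : Matrix (Fin d) (Fin d) L)) := by
  classical
  -- `A` is infinite
  haveI : Infinite (RatFunc (GaloisField p e)) :=
    Infinite.of_injective (algebraMap (Polynomial (GaloisField p e)) _)
      (RatFunc.algebraMap_injective _)
  haveI hinfF : Infinite F :=
    Infinite.of_injective (algebraMap (RatFunc (GaloisField p e)) F)
      (RingHom.injective _)
  haveI hinfA : Infinite A := by
    rw [← not_finite_iff_infinite]
    intro hfin
    have hsur : Function.Surjective
        (fun q : A × A => algebraMap A F q.1 / algebraMap A F q.2) := by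
      intro z
      obtain ⟨a, b, _, h⟩ := IsFractionRing.div_surjective (A := A) z
      exact ⟨(a, b), h⟩
    haveI : Finite F := Finite.of_surjective _ hsur
    exact not_finite F
  -- Part (1)
  have part1g : ∀ (φ' ψ' : OD →+* MdTau p e d L),
      (∀ a : A, SkewPoly.coeff (φ' (algebraMap A OD a)) 0
        = algebraMap A L a • (1 : Matrix (Fin d) (Fin d) L)) →
      (∀ a : A, SkewPoly.coeff (ψ' (algebraMap A OD a)) 0
        = algebraMap A L a • (1 : Matrix (Fin d) (Fin d) L)) →
      ∀ u v : MdTau p e d L, IsMorphism φ' ψ' u → IsMorphism φ' ψ' v →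
      SkewPoly.coeff u 0 = SkewPoly.coeff v 0 → u = v := by
    intro φ' ψ' hφ' hψ' u v hu hv h0
    have hm : IsMorphism φ' ψ' (u - v) := by
      intro b
      rw [sub_mul, mul_sub, hu b, hv b]
    have h0' : SkewPoly.coeff (u - v) 0 = 0 := by
      rw [SkewPoly.coeff_sub, h0, sub_self]
    have := morphism_eq_zero_of_coeff_zero he (algebraMap A L) hgen φ' ψ'
      hφ' hψ' (u - v) hm h0'
    exact sub_eq_zero.mp this
  have part1 := part1g φ ψ hφ.lie hψ.lie
  -- Part (3)
  have part3 : ∀ u : MdTau p e d L, IsMorphism φ φ u →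
      ∃ c : L, SkewPoly.coeff u 0 = c • (1 : Matrix (Fin d) (Fin d) L) := by
    intro u hu
    exact endo_coeff_scalar (by omega) hcentral hdim hOD.1.2 hgen φ hφ.lie u hu
  -- Part (2)
  refine ⟨part1, ?_, part3⟩
  intro u v hu hv
  have huv : IsMorphism φ φ (u * v) := by
    intro b
    rw [mul_assoc, hv b, ← mul_assoc, hu b, mul_assoc]
  have hvu : IsMorphism φ φ (v * u) := by
    intro b
    rw [mul_assoc, hu b, ← mul_assoc, hv b, mul_assoc]
  obtain ⟨c, hc⟩ := part3 u hu
  obtain ⟨c', hc'⟩ := part3 v hv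
  refine part1g φ φ hφ.lie hφ.lie (u * v) (v * u) huv hvu ?_
  rw [SkewPoly.coeff_mul_zero', SkewPoly.coeff_mul_zero', hc, hc',
    smul_mul_smul_comm, smul_mul_smul_comm, one_mul, mul_comm c c']

end Statement

end DS
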